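/- Let C₀ > 0 and let K : ℝ → ℝ be measurable with |K(x) − 4x e^{−5x/2}| ≤ C₀ e^{−5x/2} for all x ≥ 0 and |K(x)| ≤ C₀ (1+|x|) e^{x} for all x ≤ 0. Then the convolution (K∗K)(x) = ∫_ℝ K(x−y) K(y) dy is absolutely convergent for every x, and there exist constants C > 0 and x₀ > 0 such that |(K∗K)(x) − (8/3) x³ e^{−5x/2}| ≤ C x² e^{−5x/2} for all x ≥ x₀. -/

import Mathlib

open MeasureTheory Set Real

lemma aux_poly (u : ℝ) (hu : 0 ≤ u) : (1 + u) ^ 2 ≤ 16 * Real.exp (u / 2) := by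
  have h1 : u / 4 + 1 ≤ Real.exp (u / 4) := Real.add_one_le_exp _
  have h2 : Real.exp (u / 4) * Real.exp (u / 4) = Real.exp (u / 2) := by
    rw [← Real.exp_add]; ring_nf
  nlinarith [Real.exp_pos (u / 4)]


lemma aux_int (c : ℝ) (hc : 0 < c) :
    Integrable (fun y : ℝ => Real.exp (-(c * |y|))) := by
  have hIoi : IntegrableOn (fun y : ℝ => Real.exp (-(c * |y|))) (Ioi 0) := by
    refine (exp_neg_integrableOn_Ioi 0 hc).congr_fun (fun y hy => ?_) measurableSet_Ioi
    rw [abs_of_pos hy]; ring_nf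
  have hIic : IntegrableOn (fun y : ℝ => Real.exp (-(c * |y|))) (Iic 0) := by
    rw [← Measure.map_neg_eq_self (volume : Measure ℝ)]
    have m : MeasurableEmbedding fun x : ℝ => -x :=
      (Homeomorph.neg ℝ).measurableEmbedding
    rw [m.integrableOn_map_iff]
    simp_rw [Function.comp_def, abs_neg, neg_preimage, neg_Iic, neg_zero]
    exact (integrableOn_Ici_iff_integrableOn_Ioi).mpr hIoi
  have := hIic.union hIoi
  rwa [Iic_union_Ioi, integrableOn_univ] at this

section
variable {C₀ : ℝ} {K : ℝ → ℝ}


section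
variable {C₀ : ℝ} {K : ℝ → ℝ}

lemma aux_Kpos (hpos : ∀ x : ℝ, 0 ≤ x →
      |K x - 4 * x * Real.exp (-(5 * x) / 2)| ≤ C₀ * Real.exp (-(5 * x) / 2)) :
    ∀ t : ℝ, 0 ≤ t → |K t| ≤ (4 * t + C₀) * Real.exp (-(5 * t) / 2) := by
  intro t ht
  have h := hpos t ht
  have h2 := abs_sub_abs_le_abs_sub (K t) (4 * t * Real.exp (-(5 * t) / 2))
  have h3 : |4 * t * Real.exp (-(5 * t) / 2)| = 4 * t * Real.exp (-(5 * t) / 2) :=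
    abs_of_nonneg (by positivity)
  nlinarith [Real.exp_pos (-(5 * t) / 2)]


lemma aux_Kb (hC₀ : 0 < C₀)
    (hpos : ∀ x : ℝ, 0 ≤ x →
      |K x - 4 * x * Real.exp (-(5 * x) / 2)| ≤ C₀ * Real.exp (-(5 * x) / 2))
    (hneg : ∀ x : ℝ, x ≤ 0 → |K x| ≤ C₀ * (1 + |x|) * Real.exp x) :
    ∀ t : ℝ, |K t| ≤ (4 + C₀) * (1 + |t|) * Real.exp (-|t|) := by
  intro t
  rcases le_or_gt 0 t with ht | ht
  · have h1 := aux_Kpos hpos t ht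
    have h2 : Real.exp (-(5 * t) / 2) ≤ Real.exp (-t) := by
      apply Real.exp_le_exp.2; linarith
    rw [abs_of_nonneg ht]
    calc |K t| ≤ (4 * t + C₀) * Real.exp (-(5 * t) / 2) := h1
      _ ≤ (4 * t + C₀) * Real.exp (-t) := by
          apply mul_le_mul_of_nonneg_left h2 (by positivity)
      _ ≤ (4 + C₀) * (1 + t) * Real.exp (-t) := by
          have h3 : 4 * t + C₀ ≤ (4 + C₀) * (1 + t) := by nlinarith
          exact mul_le_mul_of_nonneg_right h3 (Real.exp_pos (-t)).le
  · have h1 := hneg t ht.le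
    rw [abs_of_neg ht] at h1 ⊢
    rw [neg_neg]
    refine h1.trans (mul_le_mul_of_nonneg_right ?_ (Real.exp_pos t).le)
    nlinarith

lemma aux_integrable (hC₀ : 0 < C₀) (hK : Measurable K)
    (hpos : ∀ x : ℝ, 0 ≤ x →
      |K x - 4 * x * Real.exp (-(5 * x) / 2)| ≤ C₀ * Real.exp (-(5 * x) / 2))
    (hneg : ∀ x : ℝ, x ≤ 0 → |K x| ≤ C₀ * (1 + |x|) * Real.exp x) :
    ∀ x : ℝ, Integrable (fun y => K (x - y) * K y) := by
  intro x
  have hKb := aux_Kb hC₀ hpos hneg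
  have hm : AEStronglyMeasurable (fun y => K (x - y) * K y) volume :=
    ((hK.comp (measurable_const.sub measurable_id)).mul hK).aestronglyMeasurable
  refine ((aux_int (1/2) (by norm_num)).const_mul
    (16 * (4 + C₀) ^ 2 * (1 + |x|))).mono' hm ?_
  filter_upwards with y
  rw [Real.norm_eq_abs, abs_mul]
  have hMb : (0:ℝ) ≤ 4 + C₀ := by linarith
  have hP : 1 + |x - y| ≤ (1 + |x|) * (1 + |y|) := by
    have := abs_sub x y
    nlinarith [abs_nonneg x, abs_nonneg y, abs_sub_abs_le_abs_sub x y,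
      abs_sub x y, mul_nonneg (abs_nonneg x) (abs_nonneg y), abs_sub_le x 0 y]
  have hA : Real.exp (-|x - y|) ≤ 1 := Real.exp_le_one_iff.2 (by simp [abs_nonneg])
  calc |K (x - y)| * |K y|
      ≤ ((4 + C₀) * (1 + |x - y|) * Real.exp (-|x - y|)) *
        ((4 + C₀) * (1 + |y|) * Real.exp (-|y|)) := by
        apply mul_le_mul (hKb _) (hKb _) (abs_nonneg _) (by positivity)
    _ ≤ ((4 + C₀) * ((1 + |x|) * (1 + |y|)) * 1) *
        ((4 + C₀) * (1 + |y|) * Real.exp (-|y|)) := by gcongr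
    _ = (4 + C₀) ^ 2 * (1 + |x|) * ((1 + |y|) ^ 2 * Real.exp (-|y|)) := by ring
    _ ≤ (4 + C₀) ^ 2 * (1 + |x|) * ((16 * Real.exp (|y| / 2)) * Real.exp (-|y|)) := by
        gcongr
        exact aux_poly _ (abs_nonneg _)
    _ = 16 * (4 + C₀) ^ 2 * (1 + |x|) * Real.exp (-(1/2 * |y|)) := by
        have he : Real.exp (|y| / 2) * Real.exp (-|y|) = Real.exp (-(1/2 * |y|)) := by
          rw [← Real.exp_add]; ring_nf
        rw [← he]; ring

lemma aux_left (hC₀ : 0 < C₀)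
    (hpos : ∀ x : ℝ, 0 ≤ x →
      |K x - 4 * x * Real.exp (-(5 * x) / 2)| ≤ C₀ * Real.exp (-(5 * x) / 2))
    (hneg : ∀ x : ℝ, x ≤ 0 → |K x| ≤ C₀ * (1 + |x|) * Real.exp x)
    {x : ℝ} (hx : 1 ≤ x) :
    |∫ y in Iic (0:ℝ), K (x - y) * K y| ≤
      16 * C₀ * (8 + C₀) * x * Real.exp (-(5 * x) / 2) := by
  have hg : Integrable (fun y => 16 * C₀ * (8 + C₀) * x * Real.exp (-(5 * x) / 2) *
      Real.exp y) (volume.restrict (Iic (0:ℝ))) :=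
    (integrableOn_exp_Iic 0).const_mul _
  have hb : ∀ᵐ y ∂(volume.restrict (Iic (0:ℝ))), ‖K (x - y) * K y‖ ≤
      16 * C₀ * (8 + C₀) * x * Real.exp (-(5 * x) / 2) * Real.exp y := by
    rw [ae_restrict_iff' measurableSet_Iic]
    filter_upwards with y hy
    have hy : y ≤ 0 := hy
    have h1 := aux_Kpos hpos (x - y) (by linarith)
    have h2 := hneg y hy
    rw [abs_of_nonpos hy] at h2
    rw [Real.norm_eq_abs, abs_mul]
    calc |K (x - y)| * |K y|
        ≤ ((4 * (x - y) + C₀) * Real.exp (-(5 * (x - y)) / 2)) *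
          (C₀ * (1 + -y) * Real.exp y) :=
        mul_le_mul h1 h2 (abs_nonneg _)
          (mul_nonneg (by nlinarith) (Real.exp_pos _).le)
      _ ≤ ((8 + C₀) * x * (1 + -y) * Real.exp (-(5 * (x - y)) / 2)) *
          (C₀ * (1 + -y) * Real.exp y) := by
          have hr : (0:ℝ) ≤ C₀ * (1 + -y) * Real.exp y :=
            mul_nonneg (mul_nonneg hC₀.le (by linarith)) (Real.exp_pos _).le
          refine mul_le_mul_of_nonneg_right
            (mul_le_mul_of_nonneg_right ?_ (Real.exp_pos _).le) hr
          nlinarith [mul_nonneg hC₀.le (by linarith : (0:ℝ) ≤ x - 1),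
            mul_nonneg (by linarith : (0:ℝ) ≤ -y) (by linarith : (0:ℝ) ≤ 2*x - 1),
            mul_nonneg (mul_nonneg hC₀.le (by linarith : (0:ℝ) ≤ x))
              (by linarith : (0:ℝ) ≤ -y)]
      _ = C₀ * (8 + C₀) * x * (1 + -y) ^ 2 *
          (Real.exp (-(5 * (x - y)) / 2) * Real.exp y) := by ring
      _ ≤ C₀ * (8 + C₀) * x * (16 * Real.exp (-y / 2)) *
          (Real.exp (-(5 * (x - y)) / 2) * Real.exp y) := by
          gcongr
          exact aux_poly (-y) (by linarith)
      _ = 16 * C₀ * (8 + C₀) * x *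
          Real.exp (-y / 2 + (-(5 * (x - y)) / 2 + y)) := by
          rw [Real.exp_add, Real.exp_add]; ring
      _ = 16 * C₀ * (8 + C₀) * x *
          (Real.exp (-(5 * x) / 2) * Real.exp (3 * y)) := by
          rw [← Real.exp_add]; congr 1; ring
      _ ≤ 16 * C₀ * (8 + C₀) * x *
          (Real.exp (-(5 * x) / 2) * Real.exp y) := by
          gcongr
          · linarith
      _ = 16 * C₀ * (8 + C₀) * x * Real.exp (-(5 * x) / 2) * Real.exp y := by ring
  rw [← Real.norm_eq_abs]
  refine (norm_integral_le_of_norm_le hg hb).trans_eq ?_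
  rw [integral_const_mul, integral_exp_Iic_zero, mul_one]


lemma aux_right (hC₀ : 0 < C₀)
    (hpos : ∀ x : ℝ, 0 ≤ x →
      |K x - 4 * x * Real.exp (-(5 * x) / 2)| ≤ C₀ * Real.exp (-(5 * x) / 2))
    (hneg : ∀ x : ℝ, x ≤ 0 → |K x| ≤ C₀ * (1 + |x|) * Real.exp x)
    {x : ℝ} (hx : 1 ≤ x) :
    |∫ y in Ioi x, K (x - y) * K y| ≤
      16 * C₀ * (8 + C₀) * x * Real.exp (-(5 * x) / 2) := by
  have hexp : IntegrableOn (fun y : ℝ => Real.exp (-y)) (Ioi x) := by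
    simpa using exp_neg_integrableOn_Ioi x (by norm_num : (0:ℝ) < 1)
  have hg : Integrable (fun y => 16 * C₀ * (8 + C₀) * x * Real.exp (-(3 * x) / 2) *
      Real.exp (-y)) (volume.restrict (Ioi x)) := hexp.const_mul _
  have hb : ∀ᵐ y ∂(volume.restrict (Ioi x)), ‖K (x - y) * K y‖ ≤
      16 * C₀ * (8 + C₀) * x * Real.exp (-(3 * x) / 2) * Real.exp (-y) := by
    rw [ae_restrict_iff' measurableSet_Ioi]
    filter_upwards with y hy
    have hy : x < y := hy
    have h1 := hneg (x - y) (by linarith)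
    rw [abs_of_nonpos (by linarith : x - y ≤ 0)] at h1
    have h2 := aux_Kpos hpos y (by linarith)
    rw [Real.norm_eq_abs, abs_mul]
    calc |K (x - y)| * |K y|
        ≤ (C₀ * (1 + -(x - y)) * Real.exp (x - y)) *
          ((4 * y + C₀) * Real.exp (-(5 * y) / 2)) :=
        mul_le_mul h1 h2 (abs_nonneg _)
          (mul_nonneg (mul_nonneg hC₀.le (by linarith)) (Real.exp_pos _).le)
      _ ≤ (C₀ * (1 + -(x - y)) * Real.exp (x - y)) *
          ((8 + C₀) * x * (1 + -(x - y)) * Real.exp (-(5 * y) / 2)) := by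
          have hl : (0:ℝ) ≤ C₀ * (1 + -(x - y)) * Real.exp (x - y) :=
            mul_nonneg (mul_nonneg hC₀.le (by linarith)) (Real.exp_pos _).le
          refine mul_le_mul_of_nonneg_left
            (mul_le_mul_of_nonneg_right ?_ (Real.exp_pos _).le) hl
          nlinarith [mul_nonneg hC₀.le (by linarith : (0:ℝ) ≤ x - 1),
            mul_nonneg (by linarith : (0:ℝ) ≤ y - x) (by linarith : (0:ℝ) ≤ 2*x - 1),
            mul_nonneg (mul_nonneg hC₀.le (by linarith : (0:ℝ) ≤ x))
              (by linarith : (0:ℝ) ≤ y - x)]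
      _ = C₀ * (8 + C₀) * x * (1 + -(x - y)) ^ 2 *
          (Real.exp (x - y) * Real.exp (-(5 * y) / 2)) := by ring
      _ ≤ C₀ * (8 + C₀) * x * (16 * Real.exp (-(x - y) / 2)) *
          (Real.exp (x - y) * Real.exp (-(5 * y) / 2)) := by
          gcongr
          exact aux_poly (-(x - y)) (by linarith)
      _ = 16 * C₀ * (8 + C₀) * x *
          Real.exp (-(x - y) / 2 + ((x - y) + -(5 * y) / 2)) := by
          rw [Real.exp_add, Real.exp_add]; ring
      _ ≤ 16 * C₀ * (8 + C₀) * x * Real.exp (-(3 * x) / 2 + -y) := by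
          refine mul_le_mul_of_nonneg_left (Real.exp_le_exp.2 (by linarith)) ?_
          positivity
      _ = 16 * C₀ * (8 + C₀) * x * Real.exp (-(3 * x) / 2) * Real.exp (-y) := by
          rw [Real.exp_add]; ring
  rw [← Real.norm_eq_abs]
  refine (norm_integral_le_of_norm_le hg hb).trans_eq ?_
  rw [integral_const_mul, integral_exp_neg_Ioi, mul_assoc, ← Real.exp_add]
  congr 1
  congr 1
  ring


lemma aux_mid (hC₀ : 0 < C₀)
    (hpos : ∀ x : ℝ, 0 ≤ x →
      |K x - 4 * x * Real.exp (-(5 * x) / 2)| ≤ C₀ * Real.exp (-(5 * x) / 2))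
    {x : ℝ} (hx : 1 ≤ x)
    (hf : IntegrableOn (fun y => K (x - y) * K y) (Ioc 0 x)) :
    |(∫ y in Ioc (0:ℝ) x, K (x - y) * K y) - 8 / 3 * x ^ 3 * Real.exp (-(5 * x) / 2)| ≤
      (8 * C₀ + C₀ ^ 2) * x ^ 2 * Real.exp (-(5 * x) / 2) := by
  have hx0 : (0:ℝ) ≤ x := by linarith
  set E := Real.exp (-(5 * x) / 2) with hE
  have hEpos : 0 < E := Real.exp_pos _
  have hcont : Continuous (fun y : ℝ => 16 * (x - y) * y * E) := by fun_prop
  have hmainInt : IntegrableOn (fun y : ℝ => 16 * (x - y) * y * E) (Ioc 0 x) :=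
    (intervalIntegrable_iff_integrableOn_Ioc_of_le hx0).mp (hcont.intervalIntegrable 0 x)
  have hmain : ∫ y in Ioc (0:ℝ) x, 16 * (x - y) * y * E = 8 / 3 * x ^ 3 * E := by
    rw [← intervalIntegral.integral_of_le hx0]
    have h1 : ∀ y : ℝ, 16 * (x - y) * y * E = 16 * E * x * y - 16 * E * y ^ 2 :=
      fun y => by ring
    simp_rw [h1]
    rw [intervalIntegral.integral_sub
      ((by fun_prop : Continuous fun y : ℝ => 16 * E * x * y).intervalIntegrable 0 x)
      ((by fun_prop : Continuous fun y : ℝ => 16 * E * y ^ 2).intervalIntegrable 0 x),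
      intervalIntegral.integral_const_mul, intervalIntegral.integral_const_mul,
      integral_id, integral_pow]
    ring
  have hdiff : (∫ y in Ioc (0:ℝ) x, K (x - y) * K y) - 8 / 3 * x ^ 3 * E =
      ∫ y in Ioc (0:ℝ) x, (K (x - y) * K y - 16 * (x - y) * y * E) := by
    rw [integral_sub hf hmainInt, hmain]
  rw [hdiff]
  have hconstInt : Integrable (fun _ : ℝ => (8 * C₀ * x + C₀ ^ 2) * E)
      (volume.restrict (Ioc (0:ℝ) x)) := by
    exact integrableOn_const measure_Ioc_lt_top.ne
  have hb : ∀ᵐ y ∂(volume.restrict (Ioc (0:ℝ) x)),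
      ‖K (x - y) * K y - 16 * (x - y) * y * E‖ ≤ (8 * C₀ * x + C₀ ^ 2) * E := by
    rw [ae_restrict_iff' measurableSet_Ioc]
    filter_upwards with y hy
    obtain ⟨hy0, hyx⟩ := hy
    have ha : (0:ℝ) ≤ x - y := by linarith
    have h1 := hpos (x - y) ha
    have h2 := hpos y hy0.le
    have h3 := aux_Kpos hpos y hy0.le
    have hprod : Real.exp (-(5 * (x - y)) / 2) * Real.exp (-(5 * y) / 2) = E := by
      rw [← Real.exp_add, hE]; congr 1; ring
    have hsplit : K (x - y) * K y - 16 * (x - y) * y * E =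
        (K (x - y) - 4 * (x - y) * Real.exp (-(5 * (x - y)) / 2)) * K y +
        (4 * (x - y) * Real.exp (-(5 * (x - y)) / 2)) *
          (K y - 4 * y * Real.exp (-(5 * y) / 2)) := by
      rw [← hprod]; ring
    rw [Real.norm_eq_abs, hsplit]
    calc |(K (x - y) - 4 * (x - y) * Real.exp (-(5 * (x - y)) / 2)) * K y +
        (4 * (x - y) * Real.exp (-(5 * (x - y)) / 2)) *
          (K y - 4 * y * Real.exp (-(5 * y) / 2))|
        ≤ |K (x - y) - 4 * (x - y) * Real.exp (-(5 * (x - y)) / 2)| * |K y| +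
          (4 * (x - y) * Real.exp (-(5 * (x - y)) / 2)) *
            |K y - 4 * y * Real.exp (-(5 * y) / 2)| := by
          refine (abs_add_le _ _).trans ?_
          rw [abs_mul, abs_mul, abs_of_nonneg (by positivity :
            (0:ℝ) ≤ 4 * (x - y) * Real.exp (-(5 * (x - y)) / 2))]
      _ ≤ (C₀ * Real.exp (-(5 * (x - y)) / 2)) * ((4 * y + C₀) * Real.exp (-(5 * y) / 2)) +
          (4 * (x - y) * Real.exp (-(5 * (x - y)) / 2)) * (C₀ * Real.exp (-(5 * y) / 2)) := by
          have hr2 : (0:ℝ) ≤ 4 * (x - y) * Real.exp (-(5 * (x - y)) / 2) := by positivity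
          exact add_le_add (mul_le_mul h1 h3 (abs_nonneg _) (by positivity))
            (mul_le_mul_of_nonneg_left h2 hr2)
      _ = (C₀ * (4 * y + C₀) + 4 * C₀ * (x - y)) *
          (Real.exp (-(5 * (x - y)) / 2) * Real.exp (-(5 * y) / 2)) := by ring
      _ = (C₀ * (4 * y + C₀) + 4 * C₀ * (x - y)) * E := by rw [hprod]
      _ ≤ (8 * C₀ * x + C₀ ^ 2) * E := by
          apply mul_le_mul_of_nonneg_right _ hEpos.le
          nlinarith
  calc |∫ y in Ioc (0:ℝ) x, (K (x - y) * K y - 16 * (x - y) * y * E)|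
      ≤ ∫ _ in Ioc (0:ℝ) x, (8 * C₀ * x + C₀ ^ 2) * E := by
        rw [← Real.norm_eq_abs]
        exact norm_integral_le_of_norm_le hconstInt hb
    _ = x * ((8 * C₀ * x + C₀ ^ 2) * E) := by
        rw [setIntegral_const, smul_eq_mul, Real.volume_real_Ioc_of_le hx0, sub_zero]
    _ = ((8 * C₀ * x + C₀ ^ 2) * x) * E := by ring
    _ ≤ ((8 * C₀ + C₀ ^ 2) * x ^ 2) * E := by
        refine mul_le_mul_of_nonneg_right ?_ hEpos.le
        nlinarith [mul_nonneg (mul_nonneg (sq_nonneg C₀) (by linarith : (0:ℝ) ≤ x))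
          (by linarith : (0:ℝ) ≤ x - 1)]
    _ = (8 * C₀ + C₀ ^ 2) * x ^ 2 * E := by ring

lemma aux_final (hC₀ : 0 < C₀) (hK : Measurable K)
    (hpos : ∀ x : ℝ, 0 ≤ x →
      |K x - 4 * x * Real.exp (-(5 * x) / 2)| ≤ C₀ * Real.exp (-(5 * x) / 2))
    (hneg : ∀ x : ℝ, x ≤ 0 → |K x| ≤ C₀ * (1 + |x|) * Real.exp x)
    {x : ℝ} (hx : 1 ≤ x) :
    |(∫ y, K (x - y) * K y) - 8 / 3 * x ^ 3 * Real.exp (-(5 * x) / 2)| ≤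
      (32 * C₀ * (8 + C₀) + 8 * C₀ + C₀ ^ 2 + 1) * x ^ 2 * Real.exp (-(5 * x) / 2) := by
  have hx0 : (0:ℝ) ≤ x := by linarith
  set E := Real.exp (-(5 * x) / 2) with hE
  have hEpos : 0 < E := Real.exp_pos _
  have hf := aux_integrable hC₀ hK hpos hneg x
  have hsplit2 : (∫ y in Ioi (0:ℝ), K (x - y) * K y) =
      (∫ y in Ioc (0:ℝ) x, K (x - y) * K y) + ∫ y in Ioi x, K (x - y) * K y := by
    rw [← setIntegral_union (Ioc_disjoint_Ioi le_rfl) measurableSet_Ioi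
      hf.integrableOn hf.integrableOn, Ioc_union_Ioi_eq_Ioi hx0]
  have hsplit : (∫ y, K (x - y) * K y) =
      (∫ y in Iic (0:ℝ), K (x - y) * K y) +
      (∫ y in Ioc (0:ℝ) x, K (x - y) * K y) + ∫ y in Ioi x, K (x - y) * K y := by
    rw [← intervalIntegral.integral_Iic_add_Ioi (b := (0:ℝ)) hf.integrableOn hf.integrableOn, hsplit2]
    ring
  have h1 := aux_left hC₀ hpos hneg hx
  have h2 := aux_mid hC₀ hpos hx hf.integrableOn
  have h3 := aux_right hC₀ hpos hneg hx
  have hxx : 16 * C₀ * (8 + C₀) * x * E ≤ 16 * C₀ * (8 + C₀) * x ^ 2 * E := by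
    have hx2 : x ≤ x ^ 2 := by nlinarith
    have h4 : (0:ℝ) ≤ 16 * C₀ * (8 + C₀) := by positivity
    nlinarith [mul_le_mul_of_nonneg_right
      (mul_le_mul_of_nonneg_left hx2 h4) hEpos.le]
  calc |(∫ y, K (x - y) * K y) - 8 / 3 * x ^ 3 * E|
      = |(∫ y in Iic (0:ℝ), K (x - y) * K y) +
        ((∫ y in Ioc (0:ℝ) x, K (x - y) * K y) - 8 / 3 * x ^ 3 * E) +
        (∫ y in Ioi x, K (x - y) * K y)| := by rw [hsplit]; congr 1; ring
    _ ≤ |(∫ y in Iic (0:ℝ), K (x - y) * K y)| +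
        |(∫ y in Ioc (0:ℝ) x, K (x - y) * K y) - 8 / 3 * x ^ 3 * E| +
        |(∫ y in Ioi x, K (x - y) * K y)| :=
      (abs_add_le _ _).trans (add_le_add_left (abs_add_le _ _) _)
    _ ≤ 16 * C₀ * (8 + C₀) * x * E + (8 * C₀ + C₀ ^ 2) * x ^ 2 * E +
        16 * C₀ * (8 + C₀) * x * E := add_le_add (add_le_add h1 h2) h3
    _ ≤ (32 * C₀ * (8 + C₀) + 8 * C₀ + C₀ ^ 2 + 1) * x ^ 2 * E := by
        have hE2 : (0:ℝ) ≤ x ^ 2 * E := by positivity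
        nlinarith [hxx]

end

theorem stmt7 (C₀ : ℝ) (hC₀ : 0 < C₀) (K : ℝ → ℝ) (hK : Measurable K)
    (hpos : ∀ x : ℝ, 0 ≤ x →
      |K x - 4 * x * Real.exp (-(5 * x) / 2)| ≤ C₀ * Real.exp (-(5 * x) / 2))
    (hneg : ∀ x : ℝ, x ≤ 0 → |K x| ≤ C₀ * (1 + |x|) * Real.exp x) :
    (∀ x : ℝ, Integrable (fun y => K (x - y) * K y)) ∧
    ∃ C : ℝ, 0 < C ∧ ∃ x₀ : ℝ, 0 < x₀ ∧ ∀ x : ℝ, x₀ ≤ x →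
      |(∫ y, K (x - y) * K y) - 8 / 3 * x ^ 3 * Real.exp (-(5 * x) / 2)| ≤
        C * x ^ 2 * Real.exp (-(5 * x) / 2) := by
  refine ⟨aux_integrable hC₀ hK hpos hneg,
    32 * C₀ * (8 + C₀) + 8 * C₀ + C₀ ^ 2 + 1, by positivity, 1, one_pos, ?_⟩
  intro x hx
  exact aux_final hC₀ hK hpos hneg hx
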